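/- The number of trees on the vertex set {0,1,...,n} equals (n+1)^(n-1) for all n ≥ 1 (Cayley's formula). -/

import Mathlib

open Function Finset

namespace CayleyAux

set_option linter.unusedSectionVars false

variable {V : Type} [Fintype V] [DecidableEq V]

/-- `Good R f` : `f` fixes `R` pointwise and every point eventually reaches `R`. -/
def Good (R : Finset V) (f : V → V) : Prop :=
  (∀ v ∈ R, f v = v) ∧ ∀ v, ∃ k, f^[k] v ∈ R

/-- nonroots -/
abbrev NR (R : Finset V) : Type := {v : V // v ∉ R}

def stepG (R : Finset V) (f : V → V) : NR R → NR R :=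
  fun v => if h : f ↑v ∈ R then v else ⟨f ↑v, h⟩

def stepC (R : Finset V) (f : V → V) : Finset (NR R) :=
  univ.filter (fun v => f ↑v ∈ R)

lemma mem_stepC {R : Finset V} {f : V → V} {v : NR R} : v ∈ stepC R f ↔ f ↑v ∈ R := by
  simp [stepC]

lemma stepG_of_mem {R : Finset V} {f : V → V} {v : NR R} (h : f ↑v ∈ R) :
    stepG R f v = v := dif_pos h

lemma stepG_of_not_mem {R : Finset V} {f : V → V} {v : NR R} (h : f ↑v ∉ R) :
    stepG R f v = ⟨f ↑v, h⟩ := dif_neg h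

lemma reach_stepG (R : Finset V) (f : V → V) :
    ∀ (k : ℕ) (v : NR R), f^[k] ↑v ∈ R → ∃ m, (stepG R f)^[m] v ∈ stepC R f := by
  intro k
  induction k with
  | zero => intro v hv; exact absurd hv v.2
  | succ k ih =>
    intro v hv
    by_cases h : f ↑v ∈ R
    · exact ⟨0, mem_stepC.mpr h⟩
    · rw [iterate_succ_apply] at hv
      obtain ⟨m, hm⟩ := ih ⟨f ↑v, h⟩ hv
      refine ⟨m + 1, ?_⟩
      rw [iterate_succ_apply, stepG_of_not_mem h]
      exact hm

def glue (R : Finset V) (C : Finset (NR R)) (g1 : {c : NR R // c ∈ C} → {v : V // v ∈ R})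
    (g : NR R → NR R) : V → V :=
  fun v => if hv : v ∈ R then v else
    if hc : (⟨v, hv⟩ : NR R) ∈ C then ↑(g1 ⟨⟨v, hv⟩, hc⟩) else ↑(g ⟨v, hv⟩)

lemma glue_root (R : Finset V) (C : Finset (NR R))
    (g1 : {c : NR R // c ∈ C} → {v : V // v ∈ R}) (g : NR R → NR R)
    {v : V} (hv : v ∈ R) : glue R C g1 g v = v := dif_pos hv

lemma glue_mem (R : Finset V) (C : Finset (NR R))
    (g1 : {c : NR R // c ∈ C} → {v : V // v ∈ R}) (g : NR R → NR R)
    (v : NR R) (hc : v ∈ C) : glue R C g1 g ↑v = ↑(g1 ⟨v, hc⟩) := by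
  show (if hv : ↑v ∈ R then (v : V) else
    if hc : (⟨↑v, hv⟩ : NR R) ∈ C then ↑(g1 ⟨⟨↑v, hv⟩, hc⟩) else ↑(g ⟨↑v, hv⟩)) = ↑(g1 ⟨v, hc⟩)
  rw [dif_neg v.2]
  exact dif_pos hc

lemma glue_not_mem (R : Finset V) (C : Finset (NR R))
    (g1 : {c : NR R // c ∈ C} → {v : V // v ∈ R}) (g : NR R → NR R)
    (v : NR R) (hc : v ∉ C) : glue R C g1 g ↑v = ↑(g ⟨↑v, v.2⟩) := by
  show (if hv : ↑v ∈ R then (v : V) else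
    if hc : (⟨↑v, hv⟩ : NR R) ∈ C then ↑(g1 ⟨⟨↑v, hv⟩, hc⟩) else ↑(g ⟨↑v, hv⟩)) = ↑(g ⟨↑v, v.2⟩)
  rw [dif_neg v.2]
  exact dif_neg hc

lemma glue_reach (R : Finset V) (C : Finset (NR R))
    (g1 : {c : NR R // c ∈ C} → {v : V // v ∈ R}) (g : NR R → NR R) :
    ∀ (m : ℕ) (v : NR R), g^[m] v ∈ C → ∃ k, (glue R C g1 g)^[k] ↑v ∈ R := by
  intro m
  induction m with
  | zero =>
    intro v hv
    refine ⟨1, ?_⟩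
    rw [iterate_one, glue_mem R C g1 g v hv]
    exact (g1 _).2
  | succ m ih =>
    intro v hv
    by_cases hc : v ∈ C
    · refine ⟨1, ?_⟩
      rw [iterate_one, glue_mem R C g1 g v hc]
      exact (g1 _).2
    · rw [iterate_succ_apply] at hv
      obtain ⟨k, hk⟩ := ih (g v) hv
      refine ⟨k + 1, ?_⟩
      rw [iterate_succ_apply, glue_not_mem R C g1 g v hc]
      exact hk

lemma stepC_glue (R : Finset V) (C : Finset (NR R))
    (g1 : {c : NR R // c ∈ C} → {v : V // v ∈ R}) (g : NR R → NR R) :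
    stepC R (glue R C g1 g) = C := by
  ext v
  rw [mem_stepC]
  constructor
  · intro h
    by_contra hc
    rw [glue_not_mem R C g1 g v hc] at h
    exact (g ⟨↑v, v.2⟩).2 h
  · intro hc
    rw [glue_mem R C g1 g v hc]
    exact (g1 _).2

/-- the fiber equivalence -/
def equivFiber (R : Finset V) (C : Finset (NR R)) :
    {f : V → V // Good R f ∧ stepC R f = C} ≃
      ({c : NR R // c ∈ C} → {v : V // v ∈ R}) × {g : NR R → NR R // Good C g} where
  toFun := fun p =>
    (fun c => ⟨p.1 ↑↑c, by
        obtain ⟨c, hc⟩ := c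
        rw [← p.2.2, mem_stepC] at hc
        exact hc⟩,
     ⟨stepG R p.1,
      fun c hc => stepG_of_mem (by rw [← p.2.2, mem_stepC] at hc; exact hc),
      fun v => by
        obtain ⟨k, hk⟩ := p.2.1.2 ↑v
        obtain ⟨m, hm⟩ := reach_stepG R p.1 k v hk
        exact ⟨m, by rwa [p.2.2] at hm⟩⟩)
  invFun := fun q =>
    ⟨glue R C q.1 ↑q.2,
     ⟨⟨fun v hv => glue_root R C q.1 ↑q.2 hv,
       by
        intro v
        by_cases hv : v ∈ R
        · exact ⟨0, hv⟩
        · obtain ⟨m, hm⟩ := q.2.2.2 ⟨v, hv⟩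
          exact glue_reach R C q.1 ↑q.2 m ⟨v, hv⟩ hm⟩,
      stepC_glue R C q.1 ↑q.2⟩⟩
  left_inv := by
    rintro ⟨f, ⟨hfix, hreach⟩, hstep⟩
    apply Subtype.ext
    funext v
    show glue R C _ (stepG R f) v = f v
    by_cases hv : v ∈ R
    · rw [glue_root R C _ _ hv]
      exact (hfix v hv).symm
    · by_cases hc : f v ∈ R
      · have hm : (⟨v, hv⟩ : NR R) ∈ C := by rw [← hstep, mem_stepC]; exact hc
        rw [glue_mem R C _ _ ⟨v, hv⟩ hm]
      · have hm : (⟨v, hv⟩ : NR R) ∉ C := by rw [← hstep, mem_stepC]; exact hc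
        rw [glue_not_mem R C _ _ ⟨v, hv⟩ hm]
        show ↑(stepG R f ⟨v, hv⟩) = f v
        rw [stepG_of_not_mem hc]
  right_inv := by
    rintro ⟨g1, g, hgfix, hgreach⟩
    refine Prod.ext ?_ ?_
    · funext c
      apply Subtype.ext
      show glue R C g1 g ↑↑c = ↑(g1 c)
      rw [glue_mem R C g1 g ↑c c.2]
    · apply Subtype.ext
      funext v
      show stepG R (glue R C g1 g) v = g v
      by_cases hc : v ∈ C
      · have h1 : glue R C g1 g ↑v = ↑(g1 ⟨v, hc⟩) := glue_mem R C g1 g v hc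
        rw [stepG_of_mem (h1 ▸ (g1 ⟨v, hc⟩).2)]
        exact (hgfix v hc).symm
      · have h1 : glue R C g1 g ↑v = ↑(g ⟨↑v, v.2⟩) := glue_not_mem R C g1 g v hc
        rw [stepG_of_not_mem (h1 ▸ (g ⟨↑v, v.2⟩).2)]
        apply Subtype.ext
        show glue R C g1 g ↑v = ↑(g ⟨↑v, v.2⟩)
        exact h1

end CayleyAux

namespace CayleyAux

open Function Finset

lemma natCard_sigma {ι : Type} [Fintype ι] (F : ι → Type) [∀ i, Finite (F i)] :
    Nat.card (Σ i, F i) = ∑ i, Nat.card (F i) := by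
  letI : ∀ i, Fintype (F i) := fun i => Fintype.ofFinite _
  simp only [Nat.card_eq_fintype_card]
  exact Fintype.card_sigma

lemma sum_finset_card {α : Type} [Fintype α] [DecidableEq α] (F : ℕ → ℕ) :
    ∑ C : Finset α, F C.card
      = ∑ j ∈ range (Fintype.card α + 1), (Fintype.card α).choose j * F j := by
  rw [← Finset.powerset_univ, Finset.sum_powerset_apply_card, Finset.card_univ]
  simp only [smul_eq_mul]

lemma key_identity (a b : ℕ) (ha : 1 ≤ a) :
    ∑ j ∈ range (a+1), a.choose j * (b^j * (if j = a then 1 else j * a^(a-j-1)))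
      = b * (a+b)^(a-1) := by
  apply Nat.eq_of_mul_eq_mul_left (show 0 < a from ha)
  rw [Finset.mul_sum]
  have hterm : ∀ j ∈ range (a+1),
      a * (a.choose j * (b^j * (if j = a then 1 else j * a^(a-j-1))))
        = a.choose j * b^j * (j * a^(a-j)) := by
    intro j hj
    rcases eq_or_ne j a with rfl | hne
    · rw [if_pos rfl, Nat.sub_self, pow_zero]
      ring
    · rw [if_neg hne]
      have hj' : j < a := lt_of_le_of_ne (Nat.lt_succ_iff.mp (mem_range.mp hj)) hne
      have hpow : a ^ (a - j) = a ^ (a - j - 1) * a := by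
        rw [← pow_succ]
        congr 1
        omega
      rw [hpow]
      ring
  rw [Finset.sum_congr rfl hterm, Finset.sum_range_succ']
  simp only [Nat.choose_zero_right, pow_zero, zero_mul, mul_zero, add_zero, one_mul, mul_one]
  have hterm2 : ∀ i ∈ range a,
      a.choose (i+1) * b^(i+1) * ((i+1) * a^(a-(i+1)))
        = (a * b) * ((a-1).choose i * (b^i * a^((a-1)-i))) := by
    intro i hi
    have h1 : a * (a-1).choose i = a.choose (i+1) * (i+1) := by
      have h := Nat.add_one_mul_choose_eq (a-1) i
      rw [show a - 1 + 1 = a from by omega] at h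
      exact h
    rw [show a - (i+1) = a - 1 - i from by omega, pow_succ]
    have h2 : a.choose (i+1) * (b^i * b) * ((i+1) * a^(a-1-i))
        = (a.choose (i+1) * (i+1)) * (b * (b^i * a^(a-1-i))) := by ring
    rw [h2, ← h1]
    ring
  rw [Finset.sum_congr rfl hterm2, ← Finset.mul_sum]
  have h3 : ∑ i ∈ range a, (a-1).choose i * (b^i * a^((a-1)-i)) = (b+a)^(a-1) := by
    rw [add_pow]
    rw [show a - 1 + 1 = a from by omega]
    refine Finset.sum_congr rfl fun i hi => ?_
    push_cast
    ring
  rw [h3, add_comm b a]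
  ring

theorem count_good : ∀ (n : ℕ) (V : Type) [Fintype V] [DecidableEq V] (R : Finset V),
    Fintype.card V = n →
    Nat.card {f : V → V // Good R f}
      = if R = univ then 1 else R.card * n ^ (n - R.card - 1) := by
  intro n
  induction n using Nat.strong_induction_on with
  | _ n IH =>
    intro V _ _ R hV
    by_cases hRuniv : R = univ
    · rw [if_pos hRuniv]
      subst hRuniv
      rw [Nat.card_eq_one_iff_unique]
      constructor
      · constructor
        intro f g
        apply Subtype.ext
        funext v
        rw [f.2.1 v (mem_univ v), g.2.1 v (mem_univ v)]
      · exact ⟨⟨id, fun v _ => rfl, fun v => ⟨0, mem_univ _⟩⟩⟩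
    · rw [if_neg hRuniv]
      obtain ⟨v0, hv0⟩ : ∃ v, v ∉ R := by
        by_contra h
        push_neg at h
        exact hRuniv (Finset.eq_univ_iff_forall.mpr h)
      by_cases hRempty : R = ∅
      · have : IsEmpty {f : V → V // Good R f} := by
          constructor
          rintro ⟨g, hgfix, hgreach⟩
          obtain ⟨k, hk⟩ := hgreach v0
          rw [hRempty] at hk
          exact absurd hk (Finset.notMem_empty _)
        rw [Nat.card_of_isEmpty, hRempty, Finset.card_empty, zero_mul]
      · -- main case
        have hk1 : 1 ≤ R.card := Finset.card_pos.mpr (Finset.nonempty_iff_ne_empty.mpr hRempty)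
        have hkn : R.card ≤ n := by
          rw [← hV, ← Finset.card_univ]
          exact Finset.card_le_univ R
        set a := Fintype.card (NR R) with hadef
        have ha : a = n - R.card := by
          rw [hadef, Fintype.card_subtype_compl, hV]
          congr 1
          exact Fintype.card_coe R
        have ha1 : 1 ≤ a := Fintype.card_pos_iff.mpr ⟨⟨v0, hv0⟩⟩
        have haltn : a < n := by omega
        -- decompose
        have e1 : {f : V → V // Good R f}
            ≃ Σ C : Finset (NR R), {f : V → V // Good R f ∧ stepC R f = C} :=
          (Equiv.sigmaFiberEquiv (fun y : {f : V → V // Good R f} => stepC R ↑y)).symm.trans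
            (Equiv.sigmaCongrRight fun C =>
              (Equiv.subtypeSubtypeEquivSubtypeInter (fun f : V → V => Good R f) (fun f => stepC R f = C)))
        rw [Nat.card_congr e1, natCard_sigma]
        have hfiber : ∀ C : Finset (NR R),
            Nat.card {f : V → V // Good R f ∧ stepC R f = C}
              = R.card ^ C.card * (if C.card = a then 1 else C.card * a ^ (a - C.card - 1)) := by
          intro C
          rw [Nat.card_congr (equivFiber R C), Nat.card_prod, Nat.card_fun]
          have hR : Nat.card {v : V // v ∈ R} = R.card := by
            rw [Nat.card_eq_fintype_card]
            exact Fintype.card_coe R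
          have hCc : Nat.card {c : NR R // c ∈ C} = C.card := by
            rw [Nat.card_eq_fintype_card]
            exact Fintype.card_coe C
          rw [hR, hCc, IH a haltn (NR R) C rfl]
          congr 1
          rcases eq_or_ne C univ with rfl | hCne
          · rw [if_pos rfl, if_pos Finset.card_univ]
          · rw [if_neg hCne, if_neg]
            intro h
            exact hCne ((Finset.card_eq_iff_eq_univ C).mp h)
        rw [Finset.sum_congr rfl (fun C _ => hfiber C)]
        have hsum := sum_finset_card (α := NR R)
          (fun j => R.card ^ j * (if j = a then 1 else j * a ^ (a - j - 1)))
        rw [← hadef] at hsum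
        rw [hsum, key_identity a R.card ha1]
        rw [show a + R.card = n from by omega, show a - 1 = n - R.card - 1 from by omega]

end CayleyAux

namespace CayleyAux

open Function Finset SimpleGraph

theorem count_parent (n : ℕ) (hn : 1 ≤ n) :
    Nat.card {f : Fin (n+1) → Fin (n+1) // Good ({0} : Finset (Fin (n+1))) f}
      = (n+1)^(n-1) := by
  have hne : ¬({0} : Finset (Fin (n+1))) = Finset.univ := by
    intro h
    have h1 := congrArg Finset.card h
    rw [Finset.card_singleton, Finset.card_univ, Fintype.card_fin] at h1
    omega
  rw [count_good (n+1) (Fin (n+1)) ({0}) (Fintype.card_fin _), if_neg hne,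
    Finset.card_singleton, one_mul]
  congr 1

end CayleyAux

namespace CayleyAux

open Function Finset SimpleGraph Walk

variable {n : ℕ}

/-- parent-map condition: fixes `0` and every vertex's iterates reach `0`. -/
def P (f : Fin (n+1) → Fin (n+1)) : Prop :=
  f 0 = 0 ∧ ∀ v, ∃ k, f^[k] v = 0

/-- the graph of a parent map -/
def pgraph (f : Fin (n+1) → Fin (n+1)) : SimpleGraph (Fin (n+1)) :=
  SimpleGraph.fromRel (fun a b => a ≠ 0 ∧ f a = b)

lemma pgraph_adj {f : Fin (n+1) → Fin (n+1)} {a b : Fin (n+1)} :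
    (pgraph f).Adj a b ↔ a ≠ b ∧ ((a ≠ 0 ∧ f a = b) ∨ (b ≠ 0 ∧ f b = a)) :=
  SimpleGraph.fromRel_adj _ a b

/-- height: steps to reach 0 -/
def ht (f : Fin (n+1) → Fin (n+1)) (hf : P f) (v : Fin (n+1)) : ℕ :=
  Nat.find (hf.2 v)

lemma ht_spec (f : Fin (n+1) → Fin (n+1)) (hf : P f) (v : Fin (n+1)) :
    f^[ht f hf v] v = 0 := Nat.find_spec (hf.2 v)

lemma ht_eq_zero_iff (f : Fin (n+1) → Fin (n+1)) (hf : P f) (v : Fin (n+1)) :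
    ht f hf v = 0 ↔ v = 0 := by
  rw [ht, Nat.find_eq_zero]
  simp

lemma ht_zero (f : Fin (n+1) → Fin (n+1)) (hf : P f) : ht f hf 0 = 0 :=
  (ht_eq_zero_iff f hf 0).mpr rfl

lemma ht_step (f : Fin (n+1) → Fin (n+1)) (hf : P f) {v : Fin (n+1)} (hv : v ≠ 0) :
    ht f hf v = ht f hf (f v) + 1 := by
  have h1 : ht f hf v ≠ 0 := fun h => hv ((ht_eq_zero_iff f hf v).mp h)
  obtain ⟨m, hm⟩ := Nat.exists_eq_succ_of_ne_zero h1
  have hspec : f^[m+1] v = 0 := by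
    have := ht_spec f hf v
    rw [hm] at this
    exact this
  rw [iterate_succ_apply] at hspec
  have h2 : ht f hf (f v) ≤ m := Nat.find_le hspec
  have h3 : ht f hf v ≤ ht f hf (f v) + 1 := by
    apply Nat.find_le
    rw [iterate_succ_apply]
    exact ht_spec f hf (f v)
  omega

lemma ht_f_le (f : Fin (n+1) → Fin (n+1)) (hf : P f) (v : Fin (n+1)) :
    ht f hf (f v) ≤ ht f hf v := by
  by_cases hv : v = 0
  · subst hv
    rw [hf.1]
  · rw [ht_step f hf hv]
    omega

lemma ht_iter_le (f : Fin (n+1) → Fin (n+1)) (hf : P f) :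
    ∀ (j : ℕ) (v : Fin (n+1)), ht f hf (f^[j] v) ≤ ht f hf v := by
  intro j
  induction j with
  | zero => intro v; exact le_rfl
  | succ j ih =>
    intro v
    rw [iterate_succ_apply]
    exact le_trans (ih (f v)) (ht_f_le f hf v)

lemma f_ne (f : Fin (n+1) → Fin (n+1)) (hf : P f) {v : Fin (n+1)} (hv : v ≠ 0) :
    f v ≠ v := by
  intro h
  have h1 := ht_step f hf hv
  rw [h] at h1
  omega

lemma adj_parent (f : Fin (n+1) → Fin (n+1)) (hf : P f) {v : Fin (n+1)} (hv : v ≠ 0) :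
    (pgraph f).Adj v (f v) :=
  pgraph_adj.mpr ⟨(f_ne f hf hv).symm, Or.inl ⟨hv, rfl⟩⟩

lemma adj_ht (f : Fin (n+1) → Fin (n+1)) (hf : P f) {a b : Fin (n+1)}
    (h : (pgraph f).Adj a b) :
    ht f hf a = ht f hf b + 1 ∨ ht f hf b = ht f hf a + 1 := by
  rcases pgraph_adj.mp h with ⟨hne, ⟨ha0, hfa⟩ | ⟨hb0, hfb⟩⟩
  · left; rw [← hfa]; exact ht_step f hf ha0
  · right; rw [← hfb]; exact ht_step f hf hb0

lemma parent_unique (f : Fin (n+1) → Fin (n+1)) (hf : P f) {a b : Fin (n+1)}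
    (h : (pgraph f).Adj a b) (hlt : ht f hf b < ht f hf a) : f a = b := by
  rcases pgraph_adj.mp h with ⟨hne, ⟨ha0, hfa⟩ | ⟨hb0, hfb⟩⟩
  · exact hfa
  · exfalso
    have h1 := ht_step f hf hb0
    rw [hfb] at h1
    omega

lemma pgraph_reachable (f : Fin (n+1) → Fin (n+1)) (hf : P f) (v : Fin (n+1)) :
    (pgraph f).Reachable v 0 := by
  suffices h : ∀ (m : ℕ) (v : Fin (n+1)), ht f hf v ≤ m → (pgraph f).Reachable v 0 from
    h (ht f hf v) v le_rfl
  intro m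
  induction m with
  | zero =>
    intro v hv
    have : v = 0 := (ht_eq_zero_iff f hf v).mp (Nat.le_zero.mp hv)
    subst this
    rfl
  | succ m ih =>
    intro v hv
    by_cases h0 : v = 0
    · subst h0; rfl
    · refine ((adj_parent f hf h0).reachable).trans (ih (f v) ?_)
      have := ht_step f hf h0
      omega

lemma pgraph_connected (f : Fin (n+1) → Fin (n+1)) (hf : P f) :
    (pgraph f).Connected := by
  rw [connected_iff]
  exact ⟨fun u v => (pgraph_reachable f hf u).trans (pgraph_reachable f hf v).symm, ⟨0⟩⟩

/-- descendants of `v₀` -/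
def des (f : Fin (n+1) → Fin (n+1)) (v₀ : Fin (n+1)) : Set (Fin (n+1)) :=
  {u | ∃ j, f^[j] u = v₀}

lemma mem_des_self (f : Fin (n+1) → Fin (n+1)) (v₀ : Fin (n+1)) : v₀ ∈ des f v₀ := ⟨0, rfl⟩

lemma des_closed (f : Fin (n+1) → Fin (n+1)) {v₀ u : Fin (n+1)}
    (hu : u ∈ des f v₀) (hne : u ≠ v₀) : f u ∈ des f v₀ := by
  obtain ⟨j, hj⟩ := hu
  cases j with
  | zero => exact absurd hj hne
  | succ j =>
    rw [iterate_succ_apply] at hj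
    exact ⟨j, hj⟩

lemma not_des_parent (f : Fin (n+1) → Fin (n+1)) (hf : P f) {v₀ : Fin (n+1)} (h0 : v₀ ≠ 0) :
    f v₀ ∉ des f v₀ := by
  rintro ⟨j, hj⟩
  have h1 : ht f hf v₀ ≤ ht f hf (f v₀) := by
    have := ht_iter_le f hf j (f v₀)
    rw [hj] at this
    exact this
  have h2 := ht_step f hf h0
  omega

lemma des_boundary (f : Fin (n+1) → Fin (n+1)) (hf : P f) {v₀ u x : Fin (n+1)}
    (hu : u ∈ des f v₀) (hadj : (pgraph f).Adj u x) (hx : x ∉ des f v₀) :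
    u = v₀ ∧ x = f v₀ := by
  rcases pgraph_adj.mp hadj with ⟨hne, ⟨hu0, hfu⟩ | ⟨hx0, hfx⟩⟩
  · by_cases huv : u = v₀
    · exact ⟨huv, by rw [← hfu, huv]⟩
    · exact absurd (hfu ▸ des_closed f hu huv) hx
  · exfalso
    obtain ⟨j, hj⟩ := hu
    exact hx ⟨j + 1, by rw [iterate_succ_apply, hfx]; exact hj⟩

lemma pgraph_acyclic (f : Fin (n+1) → Fin (n+1)) (hf : P f) : (pgraph f).IsAcyclic := by
  intro u c hc
  obtain ⟨m, hm, hmax⟩ := Finset.exists_max_image c.support.toFinset (ht f hf)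
    ⟨u, List.mem_toFinset.mpr c.start_mem_support⟩
  rw [List.mem_toFinset] at hm
  have hc' := hc.rotate hm
  have hnil : ¬(c.rotate m hm).Nil := by
    intro h
    have h3 := hc'.three_le_length
    rw [nil_iff_length_eq.mp h] at h3
    omega
  obtain ⟨b, hadj, p, hp⟩ := not_nil_iff.mp hnil
  have hbmem : b ∈ c.support := by
    have h1 : b ∈ (c.rotate m hm).support.tail := by
      rw [hp, support_cons, List.tail_cons]
      exact p.start_mem_support
    exact List.mem_of_mem_tail ((c.support_rotate m hm).mem_iff.mp h1)
  have hhtb : ht f hf b ≤ ht f hf m := hmax b (List.mem_toFinset.mpr hbmem)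
  have hlt : ht f hf b < ht f hf m := by
    rcases adj_ht f hf hadj with h | h <;> omega
  have hfm : f m = b := parent_unique f hf hadj hlt
  have hm0 : m ≠ 0 := by
    intro h0
    rw [h0, ht_zero] at hlt
    omega
  have hbS : b ∉ des f m := hfm ▸ not_des_parent f hf hm0
  obtain ⟨d, hd, hdS, hdnS⟩ := p.reverse.exists_boundary_dart (des f m)
    (mem_des_self f m) hbS
  obtain ⟨hdm, hdb⟩ := des_boundary f hf hdS d.adj hdnS
  have hedge : s(m, b) ∈ p.edges := by
    have h1 : d.edge ∈ p.reverse.edges := List.mem_map_of_mem hd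
    rw [edges_reverse, List.mem_reverse] at h1
    have h2 : d.edge = s(m, b) := by
      show s(d.fst, d.snd) = s(m, b)
      rw [hdm, hdb, hfm]
    rwa [h2] at h1
  rw [hp] at hc'
  have hnodup := hc'.edges_nodup
  rw [edges_cons] at hnodup
  exact (List.nodup_cons.mp hnodup).1 hedge

lemma pgraph_isTree (f : Fin (n+1) → Fin (n+1)) (hf : P f) : (pgraph f).IsTree :=
  ⟨pgraph_connected f hf, pgraph_acyclic f hf⟩

end CayleyAux

namespace CayleyAux

open Function Finset SimpleGraph Walk

variable {n : ℕ}

/-- canonical path of a tree from `v` to `0` -/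
noncomputable def thePath (G : SimpleGraph (Fin (n+1))) (hG : G.IsTree) (v : Fin (n+1)) :
    G.Walk v 0 :=
  (hG.existsUnique_path v 0).exists.choose

lemma thePath_isPath (G : SimpleGraph (Fin (n+1))) (hG : G.IsTree) (v : Fin (n+1)) :
    (thePath G hG v).IsPath :=
  (hG.existsUnique_path v 0).exists.choose_spec

lemma thePath_eq (G : SimpleGraph (Fin (n+1))) (hG : G.IsTree) {v : Fin (n+1)}
    (p : G.Walk v 0) (hp : p.IsPath) : thePath G hG v = p :=
  (hG.existsUnique_path v 0).unique (thePath_isPath G hG v) hp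

/-- parent map of a tree -/
noncomputable def par (G : SimpleGraph (Fin (n+1))) (hG : G.IsTree) (v : Fin (n+1)) :
    Fin (n+1) :=
  (thePath G hG v).getVert 1

lemma par_eq (G : SimpleGraph (Fin (n+1))) (hG : G.IsTree) {v : Fin (n+1)}
    (p : G.Walk v 0) (hp : p.IsPath) : par G hG v = p.getVert 1 := by
  rw [par, thePath_eq G hG p hp]

lemma par_zero (G : SimpleGraph (Fin (n+1))) (hG : G.IsTree) : par G hG 0 = 0 := by
  rw [par_eq G hG Walk.nil IsPath.nil]
  rfl

lemma par_adj (G : SimpleGraph (Fin (n+1))) (hG : G.IsTree) {v : Fin (n+1)} (hv : v ≠ 0) :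
    G.Adj v (par G hG v) :=
  (thePath G hG v).adj_snd (not_nil_of_ne hv)

lemma par_reach (G : SimpleGraph (Fin (n+1))) (hG : G.IsTree) (v : Fin (n+1)) :
    ∃ k, (par G hG)^[k] v = 0 := by
  suffices h : ∀ (L : ℕ) (v : Fin (n+1)), (thePath G hG v).length ≤ L →
      ∃ k, (par G hG)^[k] v = 0 from h _ v le_rfl
  intro L
  induction L with
  | zero =>
    intro v hv
    have hnil : (thePath G hG v).Nil := nil_iff_length_eq.mpr (Nat.le_zero.mp hv)
    exact ⟨0, hnil.eq⟩
  | succ L ih =>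
    intro v hv
    by_cases h0 : v = 0
    · exact ⟨0, h0⟩
    · have hnil : ¬(thePath G hG v).Nil := not_nil_of_ne h0
      have htail : (thePath G hG v).tail.IsPath := (thePath_isPath G hG v).tail
      have hq : thePath G hG (par G hG v) = (thePath G hG v).tail :=
        thePath_eq G hG _ htail
      have hlen : (thePath G hG (par G hG v)).length ≤ L := by
        rw [hq]
        have := length_tail_add_one hnil
        exact Nat.le_of_succ_le_succ (this.le.trans hv)
      obtain ⟨k, hk⟩ := ih (par G hG v) hlen
      exact ⟨k + 1, by rw [iterate_succ_apply]; exact hk⟩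

lemma par_P (G : SimpleGraph (Fin (n+1))) (hG : G.IsTree) : P (par G hG) :=
  ⟨par_zero G hG, par_reach G hG⟩

lemma pgraph_par_le (G : SimpleGraph (Fin (n+1))) (hG : G.IsTree) :
    pgraph (par G hG) ≤ G := by
  intro a b hab
  rcases pgraph_adj.mp hab with ⟨hne, ⟨ha0, hfa⟩ | ⟨hb0, hfb⟩⟩
  · exact hfa ▸ par_adj G hG ha0
  · exact (hfb ▸ par_adj G hG hb0).symm

lemma roundA (G : SimpleGraph (Fin (n+1))) (hG : G.IsTree) : pgraph (par G hG) = G := by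
  apply le_antisymm (pgraph_par_le G hG)
  intro v w hvw
  by_contra hnadj
  have hbridge := (isAcyclic_iff_forall_adj_isBridge.mp hG.IsAcyclic) hvw
  rw [isBridge_iff] at hbridge
  have hle : pgraph (par G hG) ≤ G \ fromEdgeSet {s(v, w)} := by
    intro a b hab
    rw [sdiff_adj]
    refine ⟨pgraph_par_le G hG hab, ?_⟩
    rw [fromEdgeSet_adj]
    rintro ⟨hmem, -⟩
    rw [Set.mem_singleton_iff, Sym2.eq_iff] at hmem
    rcases hmem with ⟨rfl, rfl⟩ | ⟨rfl, rfl⟩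
    · exact hnadj hab
    · exact hnadj hab.symm
  exact hbridge (Reachable.mono hle
    ((pgraph_connected (par G hG) (par_P G hG)).preconnected v w))

/-- the canonical walk of a parent map -/
def cw (f : Fin (n+1) → Fin (n+1)) (hf : P f) :
    ∀ (k : ℕ) (v : Fin (n+1)), f^[k] v = 0 → (pgraph f).Walk v 0
  | 0, _, h => Walk.nil.copy (by simpa using h.symm) rfl
  | k+1, v, h =>
    if hv : v = 0 then Walk.nil.copy hv.symm rfl
    else Walk.cons (adj_parent f hf hv)
      (cw f hf k (f v) (by rw [← iterate_succ_apply]; exact h))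

lemma cw_support_ht (f : Fin (n+1) → Fin (n+1)) (hf : P f) :
    ∀ (k : ℕ) (v : Fin (n+1)) (h : f^[k] v = 0) (u : Fin (n+1)),
      u ∈ (cw f hf k v h).support → ht f hf u ≤ ht f hf v := by
  intro k
  induction k with
  | zero =>
    intro v h u hu
    change u ∈ (Walk.nil.copy (h.symm.trans (iterate_zero_apply f v)) rfl).support at hu
    simp only [cw, support_copy, support_nil, List.mem_singleton] at hu
    subst hu
    rw [ht_zero]
    exact Nat.zero_le _
  | succ k ih =>
    intro v h u hu
    by_cases hv : v = 0
    · simp only [cw, dif_pos hv, support_copy, support_nil, List.mem_singleton] at hu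
      subst hu
      rw [ht_zero]
      exact Nat.zero_le _
    · simp only [cw, dif_neg hv, support_cons, List.mem_cons] at hu
      rcases hu with rfl | hu
      · exact le_rfl
      · exact le_trans (ih (f v) _ u hu) (ht_f_le f hf v)

lemma cw_isPath (f : Fin (n+1) → Fin (n+1)) (hf : P f) :
    ∀ (k : ℕ) (v : Fin (n+1)) (h : f^[k] v = 0), (cw f hf k v h).IsPath := by
  intro k
  induction k with
  | zero =>
    intro v h
    change (Walk.nil.copy (h.symm.trans (iterate_zero_apply f v)) rfl).IsPath
    simp only [cw, isPath_copy]
    exact IsPath.nil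
  | succ k ih =>
    intro v h
    by_cases hv : v = 0
    · simp only [cw, dif_pos hv, isPath_copy]
      exact IsPath.nil
    · simp only [cw, dif_neg hv, cons_isPath_iff]
      refine ⟨ih (f v) _, fun hmem => ?_⟩
      have h1 := cw_support_ht f hf _ _ _ v hmem
      have h2 := ht_step f hf hv
      omega

lemma cw_getVert_one (f : Fin (n+1) → Fin (n+1)) (hf : P f) (k : ℕ) (v : Fin (n+1))
    (h : f^[k+1] v = 0) (hv : v ≠ 0) : (cw f hf (k+1) v h).getVert 1 = f v := by
  simp only [cw, dif_neg hv, getVert_cons_succ, getVert_zero]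

lemma roundB (f : Fin (n+1) → Fin (n+1)) (hf : P f) (hT : (pgraph f).IsTree) :
    par (pgraph f) hT = f := by
  funext v
  by_cases hv : v = 0
  · subst hv
    rw [par_zero]
    exact hf.1.symm
  · obtain ⟨k, hk⟩ := hf.2 v
    cases k with
    | zero => exact absurd (by simpa using hk) hv
    | succ k =>
      rw [par_eq (pgraph f) hT (cw f hf (k+1) v hk) (cw_isPath f hf (k+1) v hk)]
      exact cw_getVert_one f hf k v hk hv

noncomputable def treeEquiv (n : ℕ) :
    {G : SimpleGraph (Fin (n+1)) // G.IsTree} ≃ {f : Fin (n+1) → Fin (n+1) // P f} where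
  toFun := fun G => ⟨par G.1 G.2, par_P G.1 G.2⟩
  invFun := fun f => ⟨pgraph f.1, pgraph_isTree f.1 f.2⟩
  left_inv := fun G => Subtype.ext (roundA G.1 G.2)
  right_inv := fun f => Subtype.ext (roundB f.1 f.2 _)

def pGoodEquiv (n : ℕ) :
    {f : Fin (n+1) → Fin (n+1) // P f}
      ≃ {f : Fin (n+1) → Fin (n+1) // Good ({0} : Finset (Fin (n+1))) f} :=
  Equiv.subtypeEquivRight fun f => by
    constructor
    · rintro ⟨h1, h2⟩
      refine ⟨fun v hv => ?_, fun v => (h2 v).imp fun k hk => Finset.mem_singleton.mpr hk⟩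
      rw [Finset.mem_singleton] at hv
      rw [hv]
      exact h1
    · rintro ⟨h1, h2⟩
      exact ⟨h1 0 (Finset.mem_singleton_self 0),
        fun v => (h2 v).imp fun k hk => Finset.mem_singleton.mp hk⟩

end CayleyAux

/-- Cayley's formula: the number of labeled trees on the vertex set
`{0, 1, ..., n}` (i.e. `Fin (n+1)`) equals `(n+1)^(n-1)`. -/
theorem cayley_formula (n : ℕ) (hn : 1 ≤ n) :
    Nat.card {G : SimpleGraph (Fin (n+1)) // G.IsTree} = (n+1)^(n-1) := by
  rw [Nat.card_congr ((CayleyAux.treeEquiv n).trans (CayleyAux.pGoodEquiv n))]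
  exact CayleyAux.count_parent n hn
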